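/- Ext-Shap satisfies Extended Symmetry: if v(π) = v(π_{i↔j}) for all sequences π, then Ext-Shap_i(v) = Ext-Shap_j(v), where Ext-Shap_i(v) = (1/n!) Σ_{π full sequence} (v(π_i + i) − v(π_i)). -/

import Mathlib

noncomputable section

/-- Sequences of players (lists over `Fin n`); injective sequences are `Nodup` lists. -/
abbrev TSeq (n : ℕ) := List (Fin n)

/-- `prefBefore π i` is the longest prefix of `π` not containing `i`. -/
def prefBefore {n : ℕ} (π : TSeq n) (i : Fin n) : TSeq n := π.takeWhile (· ≠ i)

/-- The marginal-contribution solution concept. -/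
def margSol {n : ℕ} (v : TSeq n → ℝ) (π : TSeq n) (i : Fin n) : ℝ :=
  if i ∈ π then v (prefBefore π i ++ [i]) - v (prefBefore π i) else 0

/-- The extended Shapley value: average marginal contribution over all full sequences,
    identified with permutations of `Fin n` via `List.ofFn`. -/
def extShap {n : ℕ} (v : TSeq n → ℝ) (i : Fin n) : ℝ :=
  (1 / n.factorial : ℝ) * ∑ σ : Equiv.Perm (Fin n), margSol v (List.ofFn ⇑σ) i

/-- `swapSeq i j π` swaps players `i` and `j` throughout the sequence `π`. -/
def swapSeq {n : ℕ} (i j : Fin n) (π : TSeq n) : TSeq n := π.map (Equiv.swap i j)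

/-- Ext-Shap satisfies Extended Symmetry. -/
lemma key {n : ℕ} (v : TSeq n → ℝ) (i j : Fin n)
    (hsym : ∀ π : TSeq n, π.Nodup → v (swapSeq i j π) = v π)
    (σ : Equiv.Perm (Fin n)) :
    margSol v (List.ofFn ⇑(Equiv.swap i j * σ)) i = margSol v (List.ofFn ⇑σ) j := by
  have hπ : List.ofFn ⇑(Equiv.swap i j * σ) = (List.ofFn ⇑σ).map (Equiv.swap i j) := by
    rw [List.map_ofFn]; rfl
  set π : TSeq n := List.ofFn ⇑σ with hπdef
  have hndπ : π.Nodup := List.nodup_ofFn.mpr σ.injective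
  have hmem : i ∈ (π.map (Equiv.swap i j)) ↔ j ∈ π := by
    constructor
    · rintro h
      obtain ⟨x, hx, hxe⟩ := List.mem_map.mp h
      have : x = j := by
        have := congrArg (Equiv.swap i j) hxe
        simpa [Equiv.swap_apply_left] using this
      rwa [this] at hx
    · intro h
      exact List.mem_map.mpr ⟨j, h, Equiv.swap_apply_right i j⟩
  have hpref : prefBefore (π.map (Equiv.swap i j)) i
      = (prefBefore π j).map (Equiv.swap i j) := by
    unfold prefBefore
    rw [List.takeWhile_map]
    congr 1
    congr 1
    funext x
    simp [Equiv.swap_apply_eq_iff]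
  have hndpref : (prefBefore π j).Nodup := (List.takeWhile_sublist _).nodup hndπ
  have hjnotmem : j ∉ prefBefore π j := by
    intro h
    have := List.mem_takeWhile_imp h
    simp at this
  have hndpref2 : (prefBefore π j ++ [j]).Nodup := by
    simp [List.nodup_append, hndpref, hjnotmem]
    exact fun a ha h => hjnotmem (h ▸ ha)
  rw [hπ]
  unfold margSol
  rw [hpref]
  by_cases hj : j ∈ π
  · rw [if_pos (hmem.mpr hj), if_pos hj]
    have h1 : v ((prefBefore π j).map (Equiv.swap i j) ++ [i]) = v (prefBefore π j ++ [j]) := by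
      have : (prefBefore π j).map (Equiv.swap i j) ++ [i]
          = swapSeq i j (prefBefore π j ++ [j]) := by
        simp [swapSeq, Equiv.swap_apply_right]
      rw [this, hsym _ hndpref2]
    have h2 : v ((prefBefore π j).map (Equiv.swap i j)) = v (prefBefore π j) := by
      rw [show (prefBefore π j).map (Equiv.swap i j) = swapSeq i j (prefBefore π j) from rfl,
        hsym _ hndpref]
    rw [h1, h2]
  · rw [if_neg (fun h => hj (hmem.mp h)), if_neg hj]

theorem stmt15 {n : ℕ} (v : TSeq n → ℝ) (i j : Fin n)
    (hsym : ∀ π : TSeq n, π.Nodup → v (swapSeq i j π) = v π) :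
    extShap v i = extShap v j := by
  unfold extShap
  congr 1
  rw [← Equiv.sum_comp (Equiv.mulLeft (Equiv.swap i j))
    (fun σ => margSol v (List.ofFn ⇑σ) i)]
  exact Finset.sum_congr rfl fun σ _ => key v i j hsym σ
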